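/- Let MV₂(I) be the set consisting of all 2 × 2 matrices A with entries in [0,1] satisfying min(A₀ⱼ, A₁ⱼ) = 0 for each column j, together with the all-ones matrix [[1,1],[1,1]]. Then MV₂(I) is closed under the product ∘ defined by (A ∘ B)_{ik} = min over j of min(A_{ij} + B_{jk}, 1): for all A, B ∈ MV₂(I), A ∘ B ∈ MV₂(I). -/
import Mathlib


/-- `MV₂(I)`: `2 × 2` matrices with entries in `[0,1]` whose every column has
meet zero, together with the all-ones matrix. -/
def MV2 : Set (Matrix (Fin 2) (Fin 2) ℝ) :=
  {A | (∀ i j, A i j ∈ Set.Icc (0 : ℝ) 1) ∧ ∀ j, min (A 0 j) (A 1 j) = 0} ∪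
    {Matrix.of fun _ _ => (1 : ℝ)}

/-- The row-by-column product in the semiring `([0,1], ∧, ⊕)`:
`(A ∘ B)_{ik} = ∧ⱼ min(A_{ij} + B_{jk}, 1)`. -/
def mvMul (A B : Matrix (Fin 2) (Fin 2) ℝ) : Matrix (Fin 2) (Fin 2) ℝ :=
  Matrix.of fun i k => min (min (A i 0 + B 0 k) 1) (min (A i 1 + B 1 k) 1)

/-- `MV₂(I)` is closed under the product `∘`. -/
theorem MV2_mul_closed (A B : Matrix (Fin 2) (Fin 2) ℝ)
    (hA : A ∈ MV2) (hB : B ∈ MV2) : mvMul A B ∈ MV2 := by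
  rcases hB with ⟨hB1, hB2⟩ | hB
  · rcases hA with ⟨hA1, hA2⟩ | hA
    · -- both generic
      left
      constructor
      · intro i k
        have h1 := hA1 i 0; have h2 := hA1 i 1
        have h3 := hB1 0 k; have h4 := hB1 1 k
        simp only [Set.mem_Icc] at h1 h2 h3 h4 ⊢
        simp only [mvMul, Matrix.of_apply]
        constructor
        · simp only [le_min_iff]
          refine ⟨⟨by linarith, by linarith⟩, by linarith, by linarith⟩
        · exact min_le_of_left_le (min_le_right _ _)
      · intro k
        have hB0 := hB1 0 k; have hB1' := hB1 1 k
        simp only [Set.mem_Icc] at hB0 hB1'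
        have hbk : B 0 k = 0 ∨ B 1 k = 0 := by
          have := hB2 k
          rcases min_cases (B 0 k) (B 1 k) with ⟨h, _⟩ | ⟨h, _⟩
          · left; linarith
          · right; linarith
        apply le_antisymm
        · simp only [mvMul, Matrix.of_apply, min_le_iff]
          rcases hbk with hb | hb
          · have ha : A 0 0 = 0 ∨ A 1 0 = 0 := by
              have := hA2 0
              have h00 := hA1 0 0; have h10 := hA1 1 0
              simp only [Set.mem_Icc] at h00 h10
              rcases min_cases (A 0 0) (A 1 0) with ⟨h, _⟩ | ⟨h, _⟩
              · left; linarith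
              · right; linarith
            rcases ha with ha | ha
            · left; left; left; linarith
            · right; left; left; linarith
          · have ha : A 0 1 = 0 ∨ A 1 1 = 0 := by
              have := hA2 1
              have h01 := hA1 0 1; have h11 := hA1 1 1
              simp only [Set.mem_Icc] at h01 h11
              rcases min_cases (A 0 1) (A 1 1) with ⟨h, _⟩ | ⟨h, _⟩
              · left; linarith
              · right; linarith
            rcases ha with ha | ha
            · left; right; left; linarith
            · right; right; left; linarith
        · simp only [mvMul, Matrix.of_apply, le_min_iff]
          have h00 := hA1 0 0; have h01 := hA1 0 1
          have h10 := hA1 1 0; have h11 := hA1 1 1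
          simp only [Set.mem_Icc] at h00 h01 h10 h11
          refine ⟨⟨⟨by linarith, by linarith⟩, by linarith, by linarith⟩,
            ⟨by linarith, by linarith⟩, by linarith, by linarith⟩
    · -- A is all-ones, B generic: product is all-ones
      simp only [Set.mem_singleton_iff] at hA
      subst hA
      right
      simp only [Set.mem_singleton_iff]
      ext i k
      have h3 := hB1 0 k; have h4 := hB1 1 k
      simp only [Set.mem_Icc] at h3 h4
      simp only [mvMul, Matrix.of_apply]
      rw [min_eq_right (show (1:ℝ) ≤ 1 + B 0 k by linarith),
        min_eq_right (show (1:ℝ) ≤ 1 + B 1 k by linarith), min_self]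
  · -- B is all-ones
    simp only [Set.mem_singleton_iff] at hB
    subst hB
    have hApos : ∀ i j, (0 : ℝ) ≤ A i j := by
      rcases hA with ⟨hA1, _⟩ | hA
      · intro i j; exact (hA1 i j).1
      · simp only [Set.mem_singleton_iff] at hA
        subst hA; intro i j; simp
    right
    simp only [Set.mem_singleton_iff]
    ext i k
    have h1 := hApos i 0; have h2 := hApos i 1
    simp only [mvMul, Matrix.of_apply]
    rw [min_eq_right (show (1:ℝ) ≤ A i 0 + 1 by linarith),
      min_eq_right (show (1:ℝ) ≤ A i 1 + 1 by linarith), min_self]
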